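/- Let n ≥ 3, let c, a_2, …, a_n ∈ [0,1] satisfy c² ≥ a_2² + ⋯ + a_n², let f, η, k, ω, α, μ be as in the multiqubit monogamy setting. If for each i = 2,…,n-1 one has f(a_i)^η ≥ k^ω f(√(a_{i+1}²+⋯+a_n²))^η, then f(c)^α ≥ μ·(f(a_2)^α + (1/2)^(α/η) f(a_3)^α + ⋯ + (1/2)^((n-3)α/η) f(a_{n-1})^α) + (1/2)^((n-2)α/η) f(a_n)^α. -/

import Mathlib

open Real

lemma anti_aux (x c L U : ℝ) (hx0 : 0 < x) (hx1 : x ≤ 1) (hL : 0 < L)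
    (hc : (1 + 1/U) ^ (x - 1) ≤ c) (hLU : L ≤ U) :
    AntitoneOn (fun u => (1 + u) ^ x - c * u ^ x) (Set.Icc L U) := by
  have hU : 0 < U := lt_of_lt_of_le hL hLU
  have hder : ∀ u ∈ Set.Ioo L U, HasDerivAt (fun u : ℝ => (1 + u) ^ x - c * u ^ x)
      (x * (1 + u) ^ (x - 1) - c * (x * u ^ (x - 1))) u := by
    intro u hu
    have hu0 : 0 < u := lt_of_lt_of_le hL hu.1.le
    have h := (((hasDerivAt_id u).const_add 1).rpow_const
        (p := x) (Or.inl (by positivity : (0:ℝ) < 1 + u).ne')).sub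
      (((hasDerivAt_id u).rpow_const (p := x) (Or.inl hu0.ne')).const_mul c)
    simp at h; exact h
  apply antitoneOn_of_deriv_nonpos (convex_Icc L U)
  · apply ContinuousOn.sub
    · apply ContinuousOn.rpow_const (by fun_prop)
      intro u hu
      left; nlinarith [hu.1]
    · apply ContinuousOn.mul continuousOn_const
      apply ContinuousOn.rpow_const (by fun_prop)
      intro u hu
      left; nlinarith [hu.1]
  · rw [interior_Icc]
    intro u hu
    exact ((hder u hu).differentiableAt).differentiableWithinAt
  · rw [interior_Icc]
    intro u hu
    have hu0 : 0 < u := lt_of_lt_of_le hL hu.1.le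
    rw [(hder u hu).deriv]
    have key : (1 + u) ^ (x - 1) ≤ c * u ^ (x - 1) := by
      have h2 : (1 + u) = u * (1 + 1/u) := by field_simp <;> ring
      rw [h2, Real.mul_rpow hu0.le (by positivity)]
      have h3 : (1 + 1/u) ^ (x - 1) ≤ (1 + 1/U) ^ (x - 1) := by
        apply Real.rpow_le_rpow_of_nonpos (by positivity)
        · gcongr
          exact hu.2.le
        · linarith
      calc u ^ (x-1) * (1 + 1/u) ^ (x-1) ≤ u ^ (x-1) * c :=
            mul_le_mul_of_nonneg_left (h3.trans hc) (by positivity)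
        _ = c * u ^ (x-1) := mul_comm _ _
    nlinarith [Real.rpow_nonneg (by positivity : (0:ℝ) ≤ 1+u) (x-1)]


lemma mu_le_one (x K : ℝ) (hx0 : 0 < x) (hx : x ≤ 1/2) (hK : 1 ≤ K) :
    (1 + K) ^ x ≤ K ^ x + (1/2 : ℝ) ^ x := by
  have h2 : (2:ℝ) ^ x - 1 ≤ (1/2:ℝ) ^ x := by
    have e1 : ((1:ℝ)/2) ^ x = ((2:ℝ) ^ x)⁻¹ := by
      rw [one_div, Real.inv_rpow (by norm_num)]
    have h1 : (1:ℝ) ≤ 2 ^ x := Real.one_le_rpow (by norm_num) hx0.le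
    have h3 : ((2:ℝ) ^ x) ^ 2 ≤ 2 := by
      rw [← Real.rpow_natCast ((2:ℝ)^x) 2, ← Real.rpow_mul (by norm_num)]
      calc (2:ℝ) ^ (x * 2) ≤ 2 ^ (1:ℝ) := by
            apply Real.rpow_le_rpow_of_exponent_le (by norm_num); linarith
        _ = 2 := Real.rpow_one 2
    have h0 : (0:ℝ) < 2 ^ x := by positivity
    rw [e1, ← sub_nonneg]
    have e2 : ((2:ℝ)^x)⁻¹ - (2^x - 1) = (2 - (2^x)^2 + (2^x - 1)*1) / 2^x := by
      field_simp; ring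
    rw [e2]
    apply div_nonneg (by nlinarith) h0.le
  have hA := anti_aux x 1 1 K hx0 (by linarith) one_pos
    (by
      apply Real.rpow_le_one_of_one_le_of_nonpos
      · have : 0 < 1/K := by positivity
        linarith
      · linarith) hK
  have hFK := hA (Set.left_mem_Icc.2 hK) (Set.right_mem_Icc.2 hK) hK
  simp only [one_mul] at hFK
  have e2 : ((1:ℝ) + 1) ^ x = 2 ^ x := by norm_num
  have e3 : (1:ℝ) ^ x = 1 := Real.one_rpow x
  rw [e2, e3] at hFK
  linarith

lemma core_ineq (x K s t : ℝ) (hx0 : 0 ≤ x) (hx : x ≤ 1/2) (hK : 1 ≤ K)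
    (hs : 0 ≤ s) (hts : K * s ≤ t) :
    ((1 + K) ^ x - (1/2:ℝ) ^ x) / K ^ x * t ^ x + (1/2:ℝ) ^ x * s ^ x ≤ (t + s) ^ x := by
  have hK0 : (0:ℝ) < K := by linarith
  have ht : 0 ≤ t := le_trans (by positivity) hts
  rcases eq_or_lt_of_le hx0 with hx0' | hx0'
  · simp [← hx0']
  rcases eq_or_lt_of_le hs with hs' | hs'
  · rw [← hs']
    have hμ : ((1 + K) ^ x - (1/2:ℝ) ^ x) / K ^ x ≤ 1 := by
      rw [div_le_one (Real.rpow_pos_of_pos hK0 x)]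
      have := mu_le_one x K hx0' hx hK
      linarith
    have htx : (0:ℝ) ≤ t ^ x := Real.rpow_nonneg ht x
    have h0x : (0:ℝ) ^ x = 0 := Real.zero_rpow hx0'.ne'
    rw [h0x, add_zero, mul_zero, add_zero]
    nlinarith
  · have ht0 : 0 < t := lt_of_lt_of_le (by positivity) hts
    set u := s / t with hu
    have hu0 : 0 < u := by positivity
    have huK : u ≤ 1/K := by
      rw [hu, div_le_div_iff₀ ht0 hK0]
      nlinarith
    have hA := anti_aux x ((1/2:ℝ)^x) u (1/K) hx0' (by linarith) hu0
      (by
        rw [one_div_one_div]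
        calc (1+K) ^ (x-1) ≤ (2:ℝ) ^ (x-1) :=
              Real.rpow_le_rpow_of_nonpos (by norm_num) (by linarith) (by linarith)
          _ ≤ (2:ℝ) ^ (-x) := by
              apply Real.rpow_le_rpow_of_exponent_le (by norm_num); linarith
          _ = (1/2:ℝ) ^ x := by
              rw [Real.rpow_neg (by norm_num), one_div, Real.inv_rpow (by norm_num)]) huK
    have hGle := hA (Set.mem_Icc.2 ⟨le_refl u, huK⟩) (Set.right_mem_Icc.2 huK) huK
    simp only at hGle
    have eμ : (1 + 1/K) ^ x - (1/2:ℝ)^x * (1/K) ^ x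
        = ((1 + K) ^ x - (1/2:ℝ) ^ x) / K ^ x := by
      rw [Real.div_rpow one_pos.le hK0.le, Real.one_rpow,
        one_add_div hK0.ne', add_comm K 1, Real.div_rpow (by linarith : (0:ℝ) ≤ 1+K) hK0.le,
        mul_one_div, div_sub_div_same]
    rw [eμ] at hGle
    have htx : (0:ℝ) < t ^ x := Real.rpow_pos_of_pos ht0 x
    have hst : s = u * t := by rw [hu]; field_simp
    have hts' : t + s = (1 + u) * t := by rw [hu]; field_simp
    calc ((1 + K) ^ x - (1/2:ℝ) ^ x) / K ^ x * t ^ x + (1/2:ℝ) ^ x * s ^ x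
        = (((1 + K) ^ x - (1/2:ℝ) ^ x) / K ^ x + (1/2:ℝ)^x * u ^ x) * t ^ x := by
          rw [hst, Real.mul_rpow hu0.le ht0.le]; ring
      _ ≤ ((1 + u) ^ x) * t ^ x := by
          apply mul_le_mul_of_nonneg_right _ htx.le
          linarith
      _ = (t + s) ^ x := by
          rw [hts', Real.mul_rpow (by positivity) ht0.le]

noncomputable def wfun (x : ℝ) (m : ℕ) : ℝ := (1/2:ℝ) ^ ((m:ℝ) * x)

lemma wfun_zero (x : ℝ) : wfun x 0 = 1 := by simp [wfun]

lemma wfun_one (x : ℝ) : wfun x 1 = (1/2:ℝ) ^ x := by simp [wfun]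

lemma wfun_succ (x : ℝ) (m : ℕ) : wfun x (m+1) = (1/2:ℝ)^x * wfun x m := by
  unfold wfun
  rw [← Real.rpow_add (by norm_num : (0:ℝ) < 1/2)]
  congr 1
  push_cast
  ring

theorem stmt_16 (n : ℕ) (hn : 3 ≤ n) (c : ℝ) (a : ℕ → ℝ)
    (hc0 : 0 ≤ c) (hc1 : c ≤ 1)
    (ha0 : ∀ i, 0 ≤ a i) (ha1 : ∀ i, a i ≤ 1)
    (hckw : c ^ 2 ≥ ∑ i ∈ Finset.Icc 2 n, a i ^ 2)
    (f : ℝ → ℝ) (η k ω α : ℝ)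
    (hf_nonneg : ∀ z ∈ Set.Icc (0 : ℝ) 1, 0 ≤ f z)
    (hf_mono : MonotoneOn f (Set.Icc (0 : ℝ) 1))
    (hη : 1 ≤ η)
    (hf_super : ∀ u v : ℝ, 0 ≤ u → 0 ≤ v → u ^ 2 + v ^ 2 ≤ 1 →
      f (Real.sqrt (u ^ 2 + v ^ 2)) ^ η ≥ f u ^ η + f v ^ η)
    (hk : 1 ≤ k) (hω : 1 ≤ ω) (hα0 : 0 ≤ α) (hα : α ≤ η / 2)
    (hcond : ∀ i, 2 ≤ i → i ≤ n - 1 →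
      f (a i) ^ η ≥ k ^ ω * f (Real.sqrt (∑ j ∈ Finset.Icc (i + 1) n, a j ^ 2)) ^ η) :
    f c ^ α ≥
      (((1 + k ^ ω) ^ (α / η) - (1 / 2 : ℝ) ^ (α / η)) / k ^ (ω * α / η)) *
          (∑ i ∈ Finset.Icc 2 (n - 1),
            (1 / 2 : ℝ) ^ ((i - 2 : ℕ) * α / η) * f (a i) ^ α) +
        (1 / 2 : ℝ) ^ ((n - 2 : ℕ) * α / η) * f (a n) ^ α := by
  have hη0 : (0:ℝ) < η := by linarith
  have hk0 : (0:ℝ) ≤ k := by linarith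
  have hx0 : 0 ≤ α / η := div_nonneg hα0 hη0.le
  have hx2 : α / η ≤ 1/2 := by
    rw [div_le_div_iff₀ hη0 (by norm_num : (0:ℝ) < 2)]
    linarith
  have hK1 : 1 ≤ k ^ ω := Real.one_le_rpow hk (by linarith)
  have hηx : η * (α / η) = α := by field_simp
  have hfnn : ∀ z, 0 ≤ z → z ≤ 1 → 0 ≤ f z := fun z h1 h2 => hf_nonneg z ⟨h1, h2⟩
  have hsum0 : ∀ i, (0:ℝ) ≤ ∑ j ∈ Finset.Icc i n, a j ^ 2 :=
    fun i => Finset.sum_nonneg fun j _ => sq_nonneg _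
  have hsum1 : ∀ i, 2 ≤ i → (∑ j ∈ Finset.Icc i n, a j ^ 2) ≤ 1 := by
    intro i hi
    calc (∑ j ∈ Finset.Icc i n, a j ^ 2) ≤ ∑ j ∈ Finset.Icc 2 n, a j ^ 2 :=
          Finset.sum_le_sum_of_subset_of_nonneg (Finset.Icc_subset_Icc hi le_rfl)
            (fun j _ _ => sq_nonneg _)
      _ ≤ c ^ 2 := hckw
      _ ≤ 1 := by nlinarith
  have hb0 : ∀ i, 0 ≤ Real.sqrt (∑ j ∈ Finset.Icc i n, a j ^ 2) := fun i => Real.sqrt_nonneg _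
  have hb1 : ∀ i, 2 ≤ i → Real.sqrt (∑ j ∈ Finset.Icc i n, a j ^ 2) ≤ 1 :=
    fun i hi => Real.sqrt_le_one.2 (hsum1 i hi)
  have hbsq : ∀ i, (Real.sqrt (∑ j ∈ Finset.Icc i n, a j ^ 2)) ^ 2
      = ∑ j ∈ Finset.Icc i n, a j ^ 2 := fun i => Real.sq_sqrt (hsum0 i)
  have hbn : Real.sqrt (∑ j ∈ Finset.Icc n n, a j ^ 2) = a n := by
    rw [Finset.Icc_self, Finset.sum_singleton, Real.sqrt_sq (ha0 n)]
  have hsplit : ∀ i, i ≤ n → (∑ j ∈ Finset.Icc i n, a j ^ 2)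
      = a i ^ 2 + ∑ j ∈ Finset.Icc (i+1) n, a j ^ 2 := by
    intro i hi
    have e : Finset.Icc i n = insert i (Finset.Icc (i+1) n) := by
      ext j; simp only [Finset.mem_Icc, Finset.mem_insert]; omega
    rw [e, Finset.sum_insert (by simp only [Finset.mem_Icc]; omega)]
  -- rpow conversion
  have hpow : ∀ z, 0 ≤ z → z ≤ 1 → (f z ^ η) ^ (α/η) = f z ^ α := by
    intro z h1 h2
    rw [← Real.rpow_mul (hfnn z h1 h2), hηx]
  -- the key step inequality
  have hstep : ∀ i, 2 ≤ i → i ≤ n - 1 →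
      (((1 + k ^ ω) ^ (α/η) - (1/2:ℝ) ^ (α/η)) / (k ^ ω) ^ (α/η)) * f (a i) ^ α
        + (1/2:ℝ) ^ (α/η) * f (Real.sqrt (∑ j ∈ Finset.Icc (i+1) n, a j ^ 2)) ^ α
      ≤ f (Real.sqrt (∑ j ∈ Finset.Icc i n, a j ^ 2)) ^ α := by
    intro i hi2 hin
    have hinn : i < n := by omega
    have hfa : 0 ≤ f (a i) := hfnn _ (ha0 i) (ha1 i)
    have hfb : 0 ≤ f (Real.sqrt (∑ j ∈ Finset.Icc (i+1) n, a j ^ 2)) :=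
      hfnn _ (hb0 (i+1)) (hb1 (i+1) (by omega))
    have ht : (0:ℝ) ≤ f (a i) ^ η := Real.rpow_nonneg hfa η
    have hs : (0:ℝ) ≤ f (Real.sqrt (∑ j ∈ Finset.Icc (i+1) n, a j ^ 2)) ^ η :=
      Real.rpow_nonneg hfb η
    have hts := hcond i hi2 hin
    have hcore := core_ineq (α/η) (k ^ ω)
      (f (Real.sqrt (∑ j ∈ Finset.Icc (i+1) n, a j ^ 2)) ^ η) (f (a i) ^ η)
      hx0 hx2 hK1 hs hts
    -- superadditivity
    have hcomb : a i ^ 2 + (Real.sqrt (∑ j ∈ Finset.Icc (i+1) n, a j ^ 2)) ^ 2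
        = ∑ j ∈ Finset.Icc i n, a j ^ 2 := by
      rw [hbsq (i+1), ← hsplit i (by omega)]
    have hsup := hf_super (a i) (Real.sqrt (∑ j ∈ Finset.Icc (i+1) n, a j ^ 2))
      (ha0 i) (hb0 (i+1)) (by rw [hcomb]; exact hsum1 i hi2)
    rw [hcomb] at hsup
    have hmono : (f (a i) ^ η + f (Real.sqrt (∑ j ∈ Finset.Icc (i+1) n, a j ^ 2)) ^ η) ^ (α/η)
        ≤ (f (Real.sqrt (∑ j ∈ Finset.Icc i n, a j ^ 2)) ^ η) ^ (α/η) :=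
      Real.rpow_le_rpow (by positivity) hsup hx0
    rw [hpow _ (ha0 i) (ha1 i), hpow _ (hb0 (i+1)) (hb1 (i+1) (by omega)),
      hpow _ (hb0 i) (hb1 i hi2)] at *
    linarith [hcore, hmono]
  -- main induction
  have hmain : ∀ m : ℕ, ∀ i : ℕ, 2 ≤ i → i + m + 1 = n →
      (((1 + k ^ ω) ^ (α/η) - (1/2:ℝ) ^ (α/η)) / (k ^ ω) ^ (α/η)) *
          (∑ j ∈ Finset.Icc i (n-1), wfun (α/η) (j - i) * f (a j) ^ α)
        + wfun (α/η) (n - i) * f (a n) ^ α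
      ≤ f (Real.sqrt (∑ j ∈ Finset.Icc i n, a j ^ 2)) ^ α := by
    intro m
    induction m with
    | zero =>
      intro i hi2 hin
      have hi : i = n - 1 := by omega
      have e1 : Finset.Icc i (n-1) = {i} := by rw [hi, Finset.Icc_self]
      have e2 : n - i = 1 := by omega
      rw [e1, Finset.sum_singleton, Nat.sub_self, wfun_zero, one_mul, e2, wfun_one]
      have := hstep i hi2 (by omega)
      rw [show i + 1 = n by omega, hbn] at this
      exact this
    | succ m ih =>
      intro i hi2 hin
      have hIH := ih (i+1) (by omega) (by omega)
      have hst := hstep i hi2 (by omega)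
      have hhalf : (0:ℝ) ≤ (1/2:ℝ) ^ (α/η) := by positivity
      have key := le_trans (add_le_add_right (mul_le_mul_of_nonneg_left hIH hhalf)
        ((((1 + k ^ ω) ^ (α/η) - (1/2:ℝ) ^ (α/η)) / (k ^ ω) ^ (α/η)) * f (a i) ^ α)) hst
      have hins : Finset.Icc i (n-1) = insert i (Finset.Icc (i+1) (n-1)) := by
        ext j; simp only [Finset.mem_Icc, Finset.mem_insert]; omega
      rw [hins, Finset.sum_insert (by simp only [Finset.mem_Icc]; omega)]
      have e2 : ∑ j ∈ Finset.Icc (i+1) (n-1), wfun (α/η) (j - i) * f (a j) ^ α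
          = (1/2:ℝ) ^ (α/η) *
            ∑ j ∈ Finset.Icc (i+1) (n-1), wfun (α/η) (j - (i+1)) * f (a j) ^ α := by
        rw [Finset.mul_sum]
        apply Finset.sum_congr rfl
        intro j hj
        simp only [Finset.mem_Icc] at hj
        rw [show j - i = (j - (i+1)) + 1 by omega, wfun_succ, mul_assoc]
      have e3 : wfun (α/η) (n - i) = (1/2:ℝ) ^ (α/η) * wfun (α/η) (n - (i+1)) := by
        rw [show n - i = (n - (i+1)) + 1 by omega, wfun_succ]
      rw [Nat.sub_self, wfun_zero, one_mul, e2, e3]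
      linarith [key]
  have hfin := hmain (n - 3) 2 le_rfl (by omega)
  have hb2c : Real.sqrt (∑ j ∈ Finset.Icc 2 n, a j ^ 2) ≤ c := by
    calc Real.sqrt (∑ j ∈ Finset.Icc 2 n, a j ^ 2) ≤ Real.sqrt (c ^ 2) :=
          Real.sqrt_le_sqrt hckw
      _ = c := Real.sqrt_sq hc0
  have hfb2c : f (Real.sqrt (∑ j ∈ Finset.Icc 2 n, a j ^ 2)) ^ α ≤ f c ^ α :=
    Real.rpow_le_rpow (hfnn _ (hb0 2) (hb1 2 le_rfl))
      (hf_mono ⟨hb0 2, hb1 2 le_rfl⟩ ⟨hc0, hc1⟩ hb2c) hα0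
  rw [ge_iff_le]
  simp only [mul_div_assoc]
  rw [Real.rpow_mul hk0 ω (α/η)]
  simp only [wfun] at hfin
  linarith [hfin, hfb2c]
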